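/- Let p be a prime. Then U_p^2 = Q^{p^3 - p^2 - p} A Q^{-1} A^p Q A^{-1} Q A^{-p}, where A = [[1,0],[1,1]], Q = [[1,(p+1)/p],[0,1]], U_p = [[p,0],[0,1/p]]. In particular U_p^2 lies in the subgroup generated by A and Q. -/

import Mathlib

abbrev SL2Q := Matrix.SpecialLinearGroup (Fin 2) ℚ

/-- A = [[1,0],[1,1]] -/
def matA : SL2Q := ⟨!![1,0;1,1], by norm_num [Matrix.det_fin_two_of]⟩
/-- B = [[0,1],[-1,0]] -/
def matB : SL2Q := ⟨!![0,1;-1,0], by norm_num [Matrix.det_fin_two_of]⟩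
/-- Q_q = [[1,q],[0,1]] -/
def matQ (q : ℚ) : SL2Q := ⟨!![1,q;0,1], by norm_num [Matrix.det_fin_two_of]⟩
/-- U_p = [[p,0],[0,1/p]] -/
def matU (p : ℚ) (hp : p ≠ 0) : SL2Q := ⟨!![p,0;0,p⁻¹], by rw [Matrix.det_fin_two_of]; field_simp; norm_num⟩
/-- lower unipotent [[1,0],[x,1]] -/
def matL (x : ℚ) : SL2Q := ⟨!![1,0;x,1], by norm_num [Matrix.det_fin_two_of]⟩

lemma matQ_mul (a b : ℚ) : matQ a * matQ b = matQ (a + b) := by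
  ext i j
  rw [Matrix.SpecialLinearGroup.coe_mul]
  fin_cases i <;> fin_cases j <;>
    simp [matQ, Matrix.SpecialLinearGroup.coe_mul, Matrix.mul_apply, Fin.sum_univ_two] <;> ring

lemma matQ_inv (a : ℚ) : (matQ a)⁻¹ = matQ (-a) := by
  rw [inv_eq_iff_mul_eq_one, matQ_mul]
  ext i j
  fin_cases i <;> fin_cases j <;> simp [matQ]

lemma matQ_pow (a : ℚ) (n : ℕ) : matQ a ^ n = matQ (n * a) := by
  induction n with
  | zero =>
    ext i j; rw [pow_zero]; fin_cases i <;> fin_cases j <;> simp [matQ]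
  | succ n ih =>
    rw [pow_succ, ih, matQ_mul]
    push_cast; ring_nf

lemma matQ_zpow (a : ℚ) (n : ℤ) : matQ a ^ n = matQ (n * a) := by
  cases n with
  | ofNat n => rw [Int.ofNat_eq_coe, zpow_natCast, matQ_pow]; norm_num
  | negSucc n =>
    rw [zpow_negSucc, matQ_pow, matQ_inv]
    congr 1
    push_cast; ring

lemma matL_mul (a b : ℚ) : matL a * matL b = matL (a + b) := by
  ext i j
  rw [Matrix.SpecialLinearGroup.coe_mul]
  fin_cases i <;> fin_cases j <;>
    simp [matL, Matrix.SpecialLinearGroup.coe_mul, Matrix.mul_apply, Fin.sum_univ_two] <;> ring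

lemma matL_inv (a : ℚ) : (matL a)⁻¹ = matL (-a) := by
  rw [inv_eq_iff_mul_eq_one, matL_mul]
  ext i j
  fin_cases i <;> fin_cases j <;> simp [matL]

lemma matA_eq : matA = matL 1 := by
  ext i j; fin_cases i <;> fin_cases j <;> simp [matA, matL]

lemma matL_pow (a : ℚ) (n : ℕ) : matL a ^ n = matL (n * a) := by
  induction n with
  | zero =>
    ext i j; rw [pow_zero]; fin_cases i <;> fin_cases j <;> simp [matL]
  | succ n ih =>
    rw [pow_succ, ih, matL_mul]
    push_cast; ring_nf

theorem stmt14 (p : ℕ) (hp : p.Prime) :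
    (matU p (Nat.cast_ne_zero.mpr hp.ne_zero))^2 =
      (matQ (((p:ℚ)+1)/p))^((p:ℤ)^3 - (p:ℤ)^2 - (p:ℤ)) * matA * (matQ (((p:ℚ)+1)/p))⁻¹ *
      matA^p * matQ (((p:ℚ)+1)/p) * matA⁻¹ * matQ (((p:ℚ)+1)/p) * matA^(-(p:ℤ)) ∧
    (matU p (Nat.cast_ne_zero.mpr hp.ne_zero))^2 ∈ Subgroup.closure {matA, matQ (((p:ℚ)+1)/p)} := by
  have hp0 : (p:ℚ) ≠ 0 := Nat.cast_ne_zero.mpr hp.ne_zero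
  have heq : (matU p (Nat.cast_ne_zero.mpr hp.ne_zero))^2 =
      (matQ (((p:ℚ)+1)/p))^((p:ℤ)^3 - (p:ℤ)^2 - (p:ℤ)) * matA * (matQ (((p:ℚ)+1)/p))⁻¹ *
      matA^p * matQ (((p:ℚ)+1)/p) * matA⁻¹ * matQ (((p:ℚ)+1)/p) * matA^(-(p:ℤ)) := by
    rw [matA_eq, matQ_zpow, matQ_inv, matL_pow, matL_inv,
      zpow_neg, zpow_natCast, matL_pow, matL_inv, pow_two]
    ext i j
    simp only [Matrix.SpecialLinearGroup.coe_mul]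
    fin_cases i <;> fin_cases j <;>
      · simp only [matU, matL, matQ, Matrix.SpecialLinearGroup.coe_mul, Matrix.mul_apply,
          Fin.sum_univ_two]
        simp
        field_simp
        ring
  refine ⟨heq, heq ▸ ?_⟩
  apply Subgroup.mul_mem
  apply Subgroup.mul_mem
  apply Subgroup.mul_mem
  apply Subgroup.mul_mem
  apply Subgroup.mul_mem
  apply Subgroup.mul_mem
  apply Subgroup.mul_mem
  · exact Subgroup.zpow_mem _ (Subgroup.subset_closure (by simp)) _
  · exact Subgroup.subset_closure (by simp)
  · exact Subgroup.inv_mem _ (Subgroup.subset_closure (by simp))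
  · exact Subgroup.pow_mem _ (Subgroup.subset_closure (by simp)) _
  · exact Subgroup.subset_closure (by simp)
  · exact Subgroup.inv_mem _ (Subgroup.subset_closure (by simp))
  · exact Subgroup.subset_closure (by simp)
  · exact Subgroup.zpow_mem _ (Subgroup.subset_closure (by simp)) _
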